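/- Let k ≥ 4 and let a, b be nonnegative integers with a + b ≤ k. Let W' be a set of size k, let B ⊆ W' have size b, and let A be a uniformly random subset of W' of size a. Then P(|A ∩ B| ≥ 2) ≤ (1/2)·(a b / k)². -/

import Mathlib

lemma two_mul_choose_two' (n : ℕ) : 2 * n.choose 2 = n * (n - 1) := by
  rcases n with _ | m
  · simp
  · rw [Nat.choose_two_right]
    have h : Even ((m + 1) * m) := by simpa [mul_comm] using Nat.even_mul_succ_self m
    rw [Nat.succ_sub_one]
    exact Nat.mul_div_cancel' h.two_dvd

lemma core_ineq' (k a b : ℕ) (ha : 2 ≤ a) (hb : 2 ≤ b) (hab : a + b ≤ k) :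
    k * (a - 1) * (b - 1) ≤ a * b * (k - 1) := by
  obtain ⟨a', rfl⟩ : ∃ a', a = a' + 2 := ⟨a - 2, by omega⟩
  obtain ⟨b', rfl⟩ : ∃ b', b = b' + 2 := ⟨b - 2, by omega⟩
  obtain ⟨c, rfl⟩ : ∃ c, k = a' + b' + 4 + c := ⟨k - (a' + b' + 4), by omega⟩
  rw [show a' + 2 - 1 = a' + 1 from by omega, show b' + 2 - 1 = b' + 1 from by omega,
    show a' + b' + 4 + c - 1 = a' + b' + 3 + c from by omega]
  nlinarith [sq_nonneg (a' + b'), Nat.zero_le a', Nat.zero_le b', Nat.zero_le c]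

/-- **Lemma 1, inequality (6)** (Bloznelis 2010): for a uniformly random `a`-element
subset `A` of a `k`-element set `W'` and a fixed `b`-element subset `B ⊆ W'` with
`a + b ≤ k` and `k ≥ 4`, `P(|A ∩ B| ≥ 2) ≤ (ab/k)²/2`. -/
theorem stmt_4 {α : Type*} [DecidableEq α] (k a b : ℕ) (hk : 4 ≤ k)
    (hab : a + b ≤ k)
    (W' B : Finset α) (hW : W'.card = k) (hBW : B ⊆ W') (hB : B.card = b) :
    (((W'.powersetCard a).filter (fun A => 2 ≤ (A ∩ B).card)).card : ℝ) / (k.choose a) ≤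
      (1 / 2 : ℝ) * (a * b / k) ^ 2 := by
  have hka : a ≤ k := le_trans (Nat.le_add_right a b) hab
  set S := (W'.powersetCard a).filter (fun A => 2 ≤ (A ∩ B).card) with hSdef
  by_cases hsmall : a < 2 ∨ b < 2
  · have hS : S = ∅ := by
      rw [Finset.eq_empty_iff_forall_notMem]
      intro A hA
      simp only [hSdef, Finset.mem_filter, Finset.mem_powersetCard] at hA
      obtain ⟨⟨hAW, hAcard⟩, h2⟩ := hA
      have h1 : (A ∩ B).card ≤ a := hAcard ▸ Finset.card_le_card Finset.inter_subset_left
      have h2' : (A ∩ B).card ≤ b := hB ▸ Finset.card_le_card Finset.inter_subset_right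
      omega
    rw [hS]
    simp only [Finset.card_empty, Nat.cast_zero, zero_div]
    positivity
  · push_neg at hsmall
    obtain ⟨ha2, hb2⟩ := hsmall
    -- counting bound
    have hcount : S.card ≤ b.choose 2 * (k - 2).choose (a - 2) := by
      have hsub : S ⊆ (B.powersetCard 2).biUnion
          (fun P => (W'.powersetCard a).filter (fun A => P ⊆ A)) := by
        intro A hA
        simp only [hSdef, Finset.mem_filter, Finset.mem_powersetCard] at hA
        obtain ⟨⟨hAW, hAcard⟩, h2⟩ := hA
        obtain ⟨P, hPsub, hPcard⟩ := Finset.exists_subset_card_eq h2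
        simp only [Finset.mem_biUnion, Finset.mem_powersetCard, Finset.mem_filter]
        exact ⟨P, ⟨hPsub.trans Finset.inter_subset_right, hPcard⟩,
          ⟨hAW, hAcard⟩, hPsub.trans Finset.inter_subset_left⟩
      have hper : ∀ P ∈ B.powersetCard 2,
          ((W'.powersetCard a).filter (fun A => P ⊆ A)).card ≤ (k - 2).choose (a - 2) := by
        intro P hP
        rw [Finset.mem_powersetCard] at hP
        obtain ⟨hPB, hP2⟩ := hP
        have hPW : P ⊆ W' := hPB.trans hBW
        have hmaps : ∀ A ∈ (W'.powersetCard a).filter (fun A => P ⊆ A),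
            A \ P ∈ (W' \ P).powersetCard (a - 2) := by
          intro A hA
          simp only [Finset.mem_filter, Finset.mem_powersetCard] at hA ⊢
          obtain ⟨⟨hAW, hAcard⟩, hPA⟩ := hA
          refine ⟨Finset.sdiff_subset_sdiff hAW le_rfl, ?_⟩
          rw [Finset.card_sdiff_of_subset hPA, hAcard, hP2]
        have hinj : Set.InjOn (fun A => A \ P)
            ((W'.powersetCard a).filter (fun A => P ⊆ A)) := by
          intro A1 h1 A2 h2 h
          simp only [Finset.coe_filter, Set.mem_setOf_eq] at h1 h2
          have e1 : A1 \ P ∪ P = A1 := Finset.sdiff_union_of_subset h1.2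
          have e2 : A2 \ P ∪ P = A2 := Finset.sdiff_union_of_subset h2.2
          rw [← e1, ← e2]
          exact congrArg (· ∪ P) h
        calc ((W'.powersetCard a).filter (fun A => P ⊆ A)).card
            ≤ ((W' \ P).powersetCard (a - 2)).card :=
              Finset.card_le_card_of_injOn _ hmaps hinj
          _ = (k - 2).choose (a - 2) := by
              rw [Finset.card_powersetCard, Finset.card_sdiff_of_subset hPW, hW, hP2]
      calc S.card ≤ ((B.powersetCard 2).biUnion
            (fun P => (W'.powersetCard a).filter (fun A => P ⊆ A))).card :=
            Finset.card_le_card hsub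
        _ ≤ ∑ P ∈ B.powersetCard 2,
            ((W'.powersetCard a).filter (fun A => P ⊆ A)).card :=
            Finset.card_biUnion_le
        _ ≤ ∑ _P ∈ B.powersetCard 2, (k - 2).choose (a - 2) :=
            Finset.sum_le_sum hper
        _ = b.choose 2 * (k - 2).choose (a - 2) := by
            rw [Finset.sum_const, Finset.card_powersetCard, hB, smul_eq_mul]
    -- key natural number inequality
    have hid : k.choose a * a.choose 2 = k.choose 2 * (k - 2).choose (a - 2) :=
      Nat.choose_mul (n := k) ha2
    have hstep : 2 * k ^ 2 * (b.choose 2 * a.choose 2) ≤ a ^ 2 * b ^ 2 * k.choose 2 := by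
      have hcore := core_ineq' k a b ha2 hb2 hab
      have h4 : 4 * (2 * k ^ 2 * (b.choose 2 * a.choose 2)) ≤
          4 * (a ^ 2 * b ^ 2 * k.choose 2) := by
        calc 4 * (2 * k ^ 2 * (b.choose 2 * a.choose 2))
            = 2 * k ^ 2 * ((2 * b.choose 2) * (2 * a.choose 2)) := by ring
          _ = 2 * k ^ 2 * ((b * (b - 1)) * (a * (a - 1))) := by
              rw [two_mul_choose_two', two_mul_choose_two']
          _ = (k * (a - 1) * (b - 1)) * (2 * k * a * b) := by ring
          _ ≤ (a * b * (k - 1)) * (2 * k * a * b) := Nat.mul_le_mul_right _ hcore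
          _ = a ^ 2 * b ^ 2 * (2 * (k * (k - 1))) := by ring
          _ = a ^ 2 * b ^ 2 * (2 * (2 * k.choose 2)) := by rw [two_mul_choose_two']
          _ = 4 * (a ^ 2 * b ^ 2 * k.choose 2) := by ring
      omega
    have hk2pos : 0 < k.choose 2 := Nat.choose_pos (by omega)
    have hkey : 2 * k ^ 2 * S.card ≤ a ^ 2 * b ^ 2 * k.choose a := by
      have h1 : 2 * k ^ 2 * S.card ≤ 2 * k ^ 2 * (b.choose 2 * (k - 2).choose (a - 2)) :=
        Nat.mul_le_mul_left _ hcount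
      have h3 : 2 * k ^ 2 * (b.choose 2 * (k - 2).choose (a - 2)) * k.choose 2 ≤
          a ^ 2 * b ^ 2 * k.choose a * k.choose 2 := by
        calc 2 * k ^ 2 * (b.choose 2 * (k - 2).choose (a - 2)) * k.choose 2
            = 2 * k ^ 2 * b.choose 2 * (k.choose 2 * (k - 2).choose (a - 2)) := by ring
          _ = 2 * k ^ 2 * b.choose 2 * (k.choose a * a.choose 2) := by rw [← hid]
          _ = 2 * k ^ 2 * (b.choose 2 * a.choose 2) * k.choose a := by ring
          _ ≤ a ^ 2 * b ^ 2 * k.choose 2 * k.choose a := Nat.mul_le_mul_right _ hstep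
          _ = a ^ 2 * b ^ 2 * k.choose a * k.choose 2 := by ring
      exact le_trans h1 (Nat.le_of_mul_le_mul_right h3 hk2pos)
    -- cast to ℝ
    have hC : (0 : ℝ) < (k.choose a : ℝ) := by exact_mod_cast Nat.choose_pos hka
    have hkpos : (0 : ℝ) < (k : ℝ) := by
      have : (0:ℕ) < k := by omega
      exact_mod_cast this
    rw [div_le_iff₀ hC]
    have hrw : (1 / 2 : ℝ) * ((a : ℝ) * b / k) ^ 2 * (k.choose a : ℝ) =
        ((a : ℝ) ^ 2 * b ^ 2 * (k.choose a : ℝ)) / (2 * k ^ 2) := by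
      rw [div_pow, eq_div_iff (by positivity)]
      have hkne : (k : ℝ) ^ 2 ≠ 0 := by positivity
      field_simp
    rw [hrw, le_div_iff₀ (by positivity)]
    calc (S.card : ℝ) * (2 * (k : ℝ) ^ 2) = ((2 * k ^ 2 * S.card : ℕ) : ℝ) := by
          push_cast; ring
      _ ≤ ((a ^ 2 * b ^ 2 * k.choose a : ℕ) : ℝ) := by exact_mod_cast hkey
      _ = (a : ℝ) ^ 2 * b ^ 2 * (k.choose a : ℝ) := by push_cast; ring
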